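/- Let N be an odd positive integer, ζ = exp(2πi/N), and for x, z ∈ ℂ with x^N + z^N = 1 define S(x|z) = Σ_{k=1}^{N} ∏_{j=1}^{k} z/(1 - xζ^j). Then x · S(x | zζ) = (1-z) · S(x | z) whenever both sides are defined (in particular x ≠ ζ^{-j} for all j). -/

import Mathlib

open Complex Real

/-- `S(x|z) = Σ_{k=1}^{N} ∏_{j=1}^{k} z/(1 - xζ^j)`, a rational function on the
Fermat curve `x^N + z^N = 1`. -/
noncomputable def Sfun (N : ℕ) (ζ x z : ℂ) : ℂ :=
  ∑ k ∈ Finset.range N, ∏ j ∈ Finset.range (k + 1), z / (1 - x * ζ ^ (j + 1))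

/-- For `N` odd, `ζ = exp(2πi/N)`, and `x^N + z^N = 1`:
`x · S(x | zζ) = (1-z) · S(x | z)` whenever the denominators are nonzero. -/
theorem Sfun_shift_z (N : ℕ) (hN : Odd N)
    (ζ : ℂ) (hζ : ζ = Complex.exp (2 * π * Complex.I / N))
    (x z : ℂ) (hcurve : x ^ N + z ^ N = 1)
    (hden : ∀ j : ℕ, 1 - x * ζ ^ j ≠ 0) :
    x * Sfun N ζ x (z * ζ) = (1 - z) * Sfun N ζ x z := by
  have hN0 : N ≠ 0 := by rintro rfl; simpa using hN
  obtain ⟨n, rfl⟩ : ∃ n, N = n + 1 :=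
    ⟨N - 1, (Nat.succ_pred_eq_of_pos (Nat.pos_of_ne_zero hN0)).symm⟩
  have hprim : IsPrimitiveRoot ζ (n + 1) := by
    rw [hζ]; exact Complex.isPrimitiveRoot_exp _ hN0
  have hζ1 : ζ ^ (n + 1) = 1 := hprim.pow_eq_one
  -- the product of all the denominators equals `1 - x^N = z^N`
  have hprod0 : ∏ j ∈ Finset.range (n + 1), (1 - x * ζ ^ j) = 1 - x ^ (n + 1) := by
    have h := X_pow_sub_C_eq_prod hprim (Nat.succ_pos n)
      (rfl : x ^ (n + 1) = x ^ (n + 1))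
    apply_fun Polynomial.eval 1 at h
    simp only [Polynomial.eval_sub, Polynomial.eval_pow, Polynomial.eval_X, Polynomial.eval_C,
      Polynomial.eval_prod, one_pow] at h
    rw [h]
    exact Finset.prod_congr rfl fun j _ => by ring
  have hprod : ∏ j ∈ Finset.range (n + 1), (1 - x * ζ ^ (j + 1)) = 1 - x ^ (n + 1) := by
    rw [Finset.prod_range_succ, hζ1, mul_one]
    rw [Finset.prod_range_succ', pow_zero, mul_one] at hprod0
    exact hprod0
  set f : ℕ → ℂ := fun m => ∏ j ∈ Finset.range m, z / (1 - x * ζ ^ (j + 1)) with hf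
  have hstep : ∀ k, x * (ζ ^ (k + 1) * f (k + 1)) = f (k + 1) - z * f k := by
    intro k
    have h1 : f (k + 1) = f k * (z / (1 - x * ζ ^ (k + 1))) := Finset.prod_range_succ _ _
    have h2 : z * f k = f (k + 1) * (1 - x * ζ ^ (k + 1)) := by
      rw [h1, mul_assoc, div_mul_cancel₀ _ (hden (k + 1))]; ring
    rw [h2]; ring
  have hshift : ∀ m, (∏ j ∈ Finset.range m, z * ζ / (1 - x * ζ ^ (j + 1))) = ζ ^ m * f m := by
    intro m
    rw [hf]
    simp only [show ∀ j : ℕ, z * ζ / (1 - x * ζ ^ (j + 1)) = ζ * (z / (1 - x * ζ ^ (j + 1)))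
      from fun j => by ring, Finset.prod_mul_distrib, Finset.prod_const, Finset.card_range]
  have hfN : z * f (n + 1) = z := by
    by_cases hz : z = 0
    · simp [hf, hz]
    · have hzN : z ^ (n + 1) ≠ 0 := pow_ne_zero _ hz
      have hfN1 : f (n + 1) = 1 := by
        rw [hf]
        simp only [Finset.prod_div_distrib, Finset.prod_const, Finset.card_range, hprod]
        rw [show (1 : ℂ) - x ^ (n + 1) = z ^ (n + 1) by linear_combination -hcurve,
          div_self hzN]
      rw [hfN1, mul_one]
  have hS1 : Sfun (n + 1) ζ x z = (∑ k ∈ Finset.range n, f (k + 1)) + f (n + 1) := by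
    show (∑ k ∈ Finset.range (n + 1), f (k + 1)) = _
    exact Finset.sum_range_succ _ _
  have hS2 : x * Sfun (n + 1) ζ x (z * ζ) =
      ((∑ k ∈ Finset.range n, f (k + 1)) + f (n + 1)) -
        z * ((∑ k ∈ Finset.range n, f (k + 1)) + 1) := by
    rw [Sfun, Finset.mul_sum]
    calc (∑ k ∈ Finset.range (n + 1), x * ∏ j ∈ Finset.range (k + 1),
            z * ζ / (1 - x * ζ ^ (j + 1)))
        = ∑ k ∈ Finset.range (n + 1), (f (k + 1) - z * f k) := by
          refine Finset.sum_congr rfl fun k _ => ?_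
          rw [hshift, hstep]
      _ = (∑ k ∈ Finset.range (n + 1), f (k + 1)) -
            z * ∑ k ∈ Finset.range (n + 1), f k := by
          rw [Finset.sum_sub_distrib, Finset.mul_sum]
      _ = ((∑ k ∈ Finset.range n, f (k + 1)) + f (n + 1)) -
            z * ((∑ k ∈ Finset.range n, f (k + 1)) + 1) := by
          rw [Finset.sum_range_succ, Finset.sum_range_succ']
          simp [hf]
  rw [hS1, hS2]
  linear_combination hfN
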